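/- arXiv:1407.7127 — 4 statements merged into one kernel-verified Lean document; each statement's English description precedes it below -/
import Mathlib

section
/- Let H be a (finite-dimensional complex) Hilbert space and L₁ a bounded operator on H that generates a contraction semigroup (i.e., Re L₁ ≤ 0 in the sense that Re(x, L₁x) ≤ 0 for all x). Then ker L₁ ∩ ran L₁ = {0}. -/
open scoped InnerProductSpace

/-- If `L₁` is a dissipative operator (`Re ⟪x, L₁ x⟫ ≤ 0` for all `x`, i.e. `L₁` generates a
contraction semigroup) on a finite-dimensional complex Hilbert space, then
`ker L₁ ∩ ran L₁ = {0}`. -/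
theorem ker_inf_range_eq_bot_of_dissipative
    {H : Type*} [NormedAddCommGroup H] [InnerProductSpace ℂ H] [FiniteDimensional ℂ H]
    (L₁ : H →L[ℂ] H)
    (hdiss : ∀ x : H, (⟪x, L₁ x⟫_ℂ).re ≤ 0) :
    LinearMap.ker (L₁ : H →ₗ[ℂ] H) ⊓ LinearMap.range (L₁ : H →ₗ[ℂ] H) = ⊥ := by
  rw [eq_bot_iff]
  rintro x ⟨hker, y, rfl⟩
  simp only [SetLike.mem_coe, LinearMap.mem_ker] at hker
  simp only [Submodule.mem_bot]
  by_contra hx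
  have hxn : (0:ℝ) < ‖L₁ y‖^2 := by
    have := norm_pos_iff.mpr hx
    positivity
  set c := (⟪y, L₁ y⟫_ℂ).re with hc
  set t : ℝ := (1 - c) / ‖L₁ y‖^2 with ht
  have h := hdiss (y + (t:ℂ) • L₁ y)
  have hL : L₁ (y + (t:ℂ) • L₁ y) = L₁ y := by
    simp [map_add, map_smul, hker]
    exact Or.inr hker
  rw [hL, inner_add_left, inner_smul_left] at h
  have hre : ((starRingEnd ℂ) (t:ℂ) * ⟪L₁ y, L₁ y⟫_ℂ).re = t * ‖L₁ y‖^2 := by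
    rw [Complex.conj_ofReal, inner_self_eq_norm_sq_to_K]
    simp
    left
    rw [← Complex.ofReal_pow, Complex.ofReal_re]
  rw [Complex.add_re, hre] at h
  rw [ht] at h
  rw [div_mul_cancel₀ _ (ne_of_gt hxn)] at h
  linarith
end

section
/- Let H be a finite-dimensional complex Hilbert space and L₁ a dissipative operator (Re(x, L₁x) ≤ 0 for all x) such that 0 is an isolated eigenvalue of L₁. Then H decomposes as the direct sum H = ker L₁ ⊕ ran L₁. -/
open scoped InnerProductSpace

/-- For a dissipative operator, any kernel vector is orthogonal to the whole range:
real-part computation. -/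
lemma dissip_re_zero
    {H : Type*} [NormedAddCommGroup H] [InnerProductSpace ℂ H]
    (L₁ : H →L[ℂ] H)
    (hdiss : ∀ x : H, (⟪x, L₁ x⟫_ℂ).re ≤ 0)
    {x : H} (hx : L₁ x = 0) (y : H) : (⟪x, L₁ y⟫_ℂ).re = 0 := by
  set r : ℝ := (⟪x, L₁ y⟫_ℂ).re with hr
  set c : ℝ := (⟪y, L₁ y⟫_ℂ).re with hc
  have hc0 : c ≤ 0 := hdiss y
  have key : ∀ t : ℝ, t * r + t ^ 2 * c ≤ 0 := by
    intro t
    have h := hdiss (x + (t : ℂ) • y)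
    have hL : L₁ (x + (t : ℂ) • y) = (t : ℂ) • L₁ y := by
      simp [map_add, map_smul, hx]
    rw [hL] at h
    have hexp : ⟪x + (t : ℂ) • y, (t : ℂ) • L₁ y⟫_ℂ
        = (t : ℂ) * ⟪x, L₁ y⟫_ℂ + (t : ℂ) * ((t : ℂ) * ⟪y, L₁ y⟫_ℂ) := by
      simp only [inner_add_left, inner_smul_left, inner_smul_right, Complex.conj_ofReal]
      ring
    rw [hexp] at h
    simpa [Complex.add_re, Complex.mul_re, Complex.ofReal_re, Complex.ofReal_im,
      mul_comm, mul_assoc, sq] using h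
  have h1 := key (r / (1 - c))
  have hpos : (0:ℝ) < 1 - c := by linarith
  have h2 : (1 - c) ^ 2 * (r / (1 - c) * r + (r / (1 - c)) ^ 2 * c) = r ^ 2 := by
    field_simp
    ring
  nlinarith [mul_pos hpos hpos, sq_nonneg r]

lemma dissip_inner_zero
    {H : Type*} [NormedAddCommGroup H] [InnerProductSpace ℂ H]
    (L₁ : H →L[ℂ] H)
    (hdiss : ∀ x : H, (⟪x, L₁ x⟫_ℂ).re ≤ 0)
    {x : H} (hx : L₁ x = 0) (y : H) : ⟪x, L₁ y⟫_ℂ = 0 := by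
  have hre := dissip_re_zero L₁ hdiss hx y
  have him := dissip_re_zero L₁ hdiss hx (Complex.I • y)
  have hJ : ⟪x, L₁ (Complex.I • y)⟫_ℂ = Complex.I * ⟪x, L₁ y⟫_ℂ := by
    rw [map_smul, inner_smul_right]
  rw [hJ] at him
  have : (Complex.I * ⟪x, L₁ y⟫_ℂ).re = -(⟪x, L₁ y⟫_ℂ).im := by
    simp [Complex.mul_re]
  rw [this] at him
  apply Complex.ext <;> simp [hre] <;> linarith

/-- If `L₁` is dissipative on a finite-dimensional complex Hilbert space and `0` is an
isolated point of its spectrum (no eigenvalue `λ` with `0 < |λ| < δ`), then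
`H = ker L₁ ⊕ ran L₁`. -/
theorem isCompl_ker_range_of_dissipative_isolated
    {H : Type*} [NormedAddCommGroup H] [InnerProductSpace ℂ H] [FiniteDimensional ℂ H]
    (L₁ : H →L[ℂ] H)
    (hdiss : ∀ x : H, (⟪x, L₁ x⟫_ℂ).re ≤ 0)
    (hiso : ∃ δ : ℝ, 0 < δ ∧ ∀ lam : ℂ, lam ∈ spectrum ℂ L₁ →
      0 < ‖lam‖ → ‖lam‖ < δ → False) :
    IsCompl (LinearMap.ker (L₁ : H →ₗ[ℂ] H)) (LinearMap.range (L₁ : H →ₗ[ℂ] H)) := by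
  have hle : LinearMap.ker (L₁ : H →ₗ[ℂ] H) ≤ (LinearMap.range (L₁ : H →ₗ[ℂ] H))ᗮ := by
    intro x hx
    rw [Submodule.mem_orthogonal]
    rintro u ⟨y, rfl⟩
    rw [← inner_eq_zero_symm]
    exact dissip_inner_zero L₁ hdiss (LinearMap.mem_ker.mp hx) y
  have hdim : Module.finrank ℂ (LinearMap.ker (L₁ : H →ₗ[ℂ] H))
      = Module.finrank ℂ ((LinearMap.range (L₁ : H →ₗ[ℂ] H))ᗮ) := by
    have h1 : Module.finrank ℂ (LinearMap.range (L₁ : H →ₗ[ℂ] H)) + Module.finrank ℂ (LinearMap.ker (L₁ : H →ₗ[ℂ] H))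
        = Module.finrank ℂ H := LinearMap.finrank_range_add_finrank_ker (L₁ : H →ₗ[ℂ] H)
    have h2 := Submodule.finrank_add_finrank_orthogonal (K := LinearMap.range (L₁ : H →ₗ[ℂ] H))
    omega
  have heq : LinearMap.ker (L₁ : H →ₗ[ℂ] H) = (LinearMap.range (L₁ : H →ₗ[ℂ] H))ᗮ :=
    Submodule.eq_of_le_of_finrank_eq hle hdim
  rw [heq]
  exact (Submodule.isCompl_orthogonal_of_hasOrthogonalProjection (K := LinearMap.range (L₁ : H →ₗ[ℂ] H))).symm
end

section
/- Let P(s), s ∈ [0,1], be a C¹ family of projections on a finite-dimensional normed space, and let T(s,s') be the solution of ∂ₛ T(s,s') = [Ṗ(s), P(s)] T(s,s') with T(s',s') = 1. Then the intertwining property T(s,s') P(s') = P(s) T(s,s') holds for all s, s'. -/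
open Set Real

/-- Intertwining property of parallel transport: if `P` is a `C¹` family of projections on a
finite-dimensional normed space and `T (·, s')` solves
`∂ₛ T(s,s') = [Ṗ(s), P(s)] T(s,s')`, `T(s',s') = 1`, then
`T(s,s') P(s') = P(s) T(s,s')`. -/
theorem parallel_transport_intertwines
    {B : Type*} [NormedAddCommGroup B] [NormedSpace ℝ B] [FiniteDimensional ℝ B]
    (P P' : ℝ → (B →L[ℝ] B))
    (hproj : ∀ s, (P s) ∘L (P s) = P s)
    (hP : ∀ s, HasDerivAt P (P' s) s)
    (hP' : Continuous P')
    (T : ℝ → ℝ → (B →L[ℝ] B))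
    (hT0 : ∀ s', T s' s' = 1)
    (hT : ∀ s s' : ℝ, HasDerivAt (fun u => T u s')
      ((P' s ∘L P s - P s ∘L P' s) ∘L T s s') s) :
    ∀ s s' : ℝ, (T s s') ∘L (P s') = (P s) ∘L (T s s') := by
  -- the commutator
  set A : ℝ → (B →L[ℝ] B) := fun u => P' u ∘L P u - P u ∘L P' u with hA
  -- derivative of hproj : P' P + P P' = P'
  have hid : ∀ u, P' u ∘L P u + P u ∘L P' u = P' u := by
    intro u
    have h1 : HasDerivAt (fun v => P v ∘L P v) (P' u ∘L P u + P u ∘L P' u) u :=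
      (hP u).clm_comp (hP u)
    have h2 : (fun v => P v ∘L P v) = P := funext hproj
    rw [h2] at h1
    exact h1.unique (hP u)
  -- P P' P = 0
  have hPP'P : ∀ u, P u * (P' u * P u) = 0 := by
    intro u
    have hq : P' u * P u + P u * P' u = P' u := hid u
    have hp : P u * P u = P u := hproj u
    have h := congrArg (fun X => P u * X) hq
    simp only [mul_add, ← mul_assoc, hp] at h
    -- h : P u * P' u * P u + P u * P' u = P u * P' u
    have h2 : P u * P' u * P u = 0 := by
      have := add_eq_right.mp h
      exact this
    rw [mul_assoc] at h2
    exact h2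
  -- key operator identity : P' + P A = A P
  have key : ∀ u, P' u + P u * A u = A u * P u := by
    intro u
    have hq : P' u * P u + P u * P' u = P' u := hid u
    have hp : P u * P u = P u := hproj u
    have h0 : P u * (P' u * P u) = 0 := hPP'P u
    have e1 : P u * (P' u * P u - P u * P' u) = - (P u * P' u) := by
      rw [mul_sub, h0, ← mul_assoc, hp, zero_sub]
    have e2 : (P' u * P u - P u * P' u) * P u = P' u * P u := by
      rw [sub_mul, mul_assoc (P u), h0, mul_assoc, hp, sub_zero]
    show P' u + P u * (P' u * P u - P u * P' u) = (P' u * P u - P u * P' u) * P u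
    rw [e1, e2, ← sub_eq_add_neg]
    exact (eq_sub_of_add_eq hq).symm
  intro s s'
  -- the function F and the fact that it satisfies F' = A F
  set F : ℝ → (B →L[ℝ] B) := fun u => P u ∘L T u s' - T u s' ∘L P s' with hF
  have hA_cont : Continuous A := by
    have hPc : Continuous P := by
      rw [continuous_iff_continuousAt]; exact fun u => (hP u).continuousAt
    exact (hP'.clm_comp hPc).sub (hPc.clm_comp hP')
  have hF' : ∀ u, HasDerivAt F (A u ∘L F u) u := by
    intro u
    have h1 : HasDerivAt (fun v => P v ∘L T v s')
        (P' u ∘L T u s' + P u ∘L (A u ∘L T u s')) u := (hP u).clm_comp (hT u s')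
    have h2 : HasDerivAt (fun v => T v s' ∘L P s')
        ((A u ∘L T u s') ∘L P s' + T u s' ∘L 0) u :=
      (hT u s').clm_comp (hasDerivAt_const u (P s'))
    have h3 := h1.sub h2
    convert h3 using 1
    show A u * (P u * T u s' - T u s' * P s')
      = (P' u * T u s' + P u * (A u * T u s')) - ((A u * T u s') * P s' + T u s' * 0)
    rw [mul_sub, ← mul_assoc, ← key u]
    noncomm_ring
    all_goals rfl
  -- set up the uniqueness argument on [a, b]
  set a : ℝ := min s s' - 1 with ha
  set b : ℝ := max s s' + 1 with hb
  have hab : a ≤ b := by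
    have : min s s' ≤ max s s' := le_trans (min_le_left _ _) (le_max_left _ _)
    simp only [ha, hb]; linarith
  -- clamp
  set c : ℝ → ℝ := fun t => min b (max a t) with hc
  have hc_mem : ∀ t, c t ∈ Icc a b := by
    intro t
    refine ⟨le_min hab (le_max_left _ _), min_le_left _ _⟩
  have hc_eq : ∀ t ∈ Icc a b, c t = t := by
    intro t ht
    simp only [hc]
    rw [max_eq_right ht.1, min_eq_right ht.2]
  -- bound on ‖A‖ over [a,b]
  obtain ⟨C, hC⟩ := (isCompact_Icc (a := a) (b := b)).exists_bound_of_continuousOn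
    hA_cont.continuousOn
  set v : ℝ → (B →L[ℝ] B) → (B →L[ℝ] B) := fun t X => A (c t) ∘L X with hv
  have hlip : ∀ t, LipschitzOnWith C.toNNReal (v t) univ := by
    intro t
    rw [lipschitzOnWith_univ]
    apply LipschitzWith.of_dist_le_mul
    intro X Y
    simp only [hv, dist_eq_norm, ← ContinuousLinearMap.comp_sub]
    calc ‖A (c t) ∘L (X - Y)‖ ≤ ‖A (c t)‖ * ‖X - Y‖ := ContinuousLinearMap.opNorm_comp_le _ _
      _ ≤ C.toNNReal * ‖X - Y‖ := by
          apply mul_le_mul_of_nonneg_right _ (norm_nonneg _)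
          exact le_trans (hC _ (hc_mem t)) (Real.le_coe_toNNReal C)
  have hs'mem : s' ∈ Ioo a b := by
    constructor
    · have : min s s' ≤ s' := min_le_right _ _
      simp only [ha]; linarith
    · have : s' ≤ max s s' := le_max_right _ _
      simp only [hb]; linarith
  have heq : EqOn F (fun _ => 0) (Icc a b) := by
    apply ODE_solution_unique_of_mem_Icc (v := v) (s := fun _ => univ) (fun t _ => hlip t) hs'mem
    · exact continuousOn_of_forall_continuousAt fun t _ => (hF' t).continuousAt
    · intro t ht
      have := hF' t
      rwa [show A t = A (c t) by rw [hc_eq t (Ioo_subset_Icc_self ht)]] at this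
    · exact fun _ _ => mem_univ _
    · exact continuousOn_const
    · intro t ht
      have : v t 0 = 0 := by simp [hv]
      rw [this]
      exact hasDerivAt_const t (0 : B →L[ℝ] B)
    · exact fun _ _ => mem_univ _
    · simp only [hF, hT0 s']
      rw [show (P s') ∘L (1 : B →L[ℝ] B) = P s' from ContinuousLinearMap.comp_id _,
        show (1 : B →L[ℝ] B) ∘L (P s') = P s' from ContinuousLinearMap.id_comp _]
      simp
  have hsmem : s ∈ Icc a b := by
    constructor
    · have : min s s' ≤ s := min_le_left _ _
      simp only [ha]; linarith
    · have : s ≤ max s s' := le_max_left _ _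
      simp only [hb]; linarith
  have := heq hsmem
  simp only [hF] at this
  have h := sub_eq_zero.mp this
  exact h.symm
end

section
/- Let P(s) be a C¹ family of projections and T(s,s') the associated parallel transport (solution of ∂ₛT = [Ṗ(s),P(s)]T, T(s',s') = 1). If x(s) = T(s,s') x(s') with x(s') ∈ ran P(s'), then P(s) ẋ(s) = 0 for all s. -/
open Set

/-- A parallel section has zero covariant derivative: if `P` is a `C¹` family of projections,
`T` the associated parallel transport (`∂ₛT = [Ṗ(s),P(s)]T`, `T(s',s') = 1`) and
`x(s) = T(s,s') x₀` with `x₀ ∈ ran P(s')`, then `P(s) ẋ(s) = 0` for all `s`. -/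
theorem parallel_section_covariant_deriv_zero
    {B : Type*} [NormedAddCommGroup B] [NormedSpace ℝ B] [FiniteDimensional ℝ B]
    (P P' : ℝ → (B →L[ℝ] B))
    (hproj : ∀ s, (P s) ∘L (P s) = P s)
    (hP : ∀ s, HasDerivAt P (P' s) s)
    (hP' : Continuous P')
    (T : ℝ → ℝ → (B →L[ℝ] B))
    (hT0 : ∀ s', T s' s' = 1)
    (hT : ∀ s s' : ℝ, HasDerivAt (fun u => T u s')
      ((P' s ∘L P s - P s ∘L P' s) ∘L T s s') s)
    (s' : ℝ) (x₀ : B) (hx₀ : x₀ ∈ LinearMap.range (P s' : B →ₗ[ℝ] B))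
    (x x' : ℝ → B)
    (hxdef : ∀ s, x s = T s s' x₀)
    (hx : ∀ s, HasDerivAt x (x' s) s) :
    ∀ s, P s (x' s) = 0 := by
  -- P s (P s z) = P s z
  have hPz : ∀ s z, P s (P s z) = P s z := by
    intro s z
    have := DFunLike.congr_fun (hproj s) z
    simpa using this
  -- Leibniz rule on P ∘ P = P gives P' P + P P' = P'
  have hPP' : ∀ s, P' s ∘L P s + P s ∘L P' s = P' s := by
    intro s
    have h1 : HasDerivAt (fun u => P u ∘L P u) (P' s ∘L P s + P s ∘L P' s) s :=
      (hP s).clm_comp (hP s)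
    have h2 : (fun u => P u ∘L P u) = P := funext hproj
    rw [h2] at h1
    exact h1.unique (hP s)
  -- key identity: P P' P = 0
  have key : ∀ s z, P s (P' s (P s z)) = 0 := by
    intro s z
    have h := DFunLike.congr_fun (hPP' s) (P s z)
    simp only [ContinuousLinearMap.add_apply, ContinuousLinearMap.comp_apply, hPz] at h
    have h' : P' s (P s z) + P s (P' s (P s z)) = P' s (P s z) := h
    exact (add_eq_left).mp h'
  -- derivative of x
  have hx'eq : ∀ s, x' s = P' s (P s (x s)) - P s (P' s (x s)) := by
    intro s
    have h1 := (hT s s').clm_apply (hasDerivAt_const s x₀)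
    have hfun : (fun u => T u s' x₀) = x := by
      funext u; exact (hxdef u).symm
    rw [hfun] at h1
    have h2 := (hx s).unique h1
    rw [h2]
    simp [ContinuousLinearMap.comp_apply, ContinuousLinearMap.sub_apply, ← hxdef s]
  -- y = P x - x satisfies y' = -P' y
  set y : ℝ → B := fun s => P s (x s) - x s with hy_def
  have hy' : ∀ s, HasDerivAt y (-(P' s (y s))) s := by
    intro s
    have h1 : HasDerivAt (fun u => P u (x u)) (P' s (x s) + P s (x' s)) s :=
      (hP s).clm_apply (hx s)
    have h2 := h1.sub (hx s)
    convert h2 using 1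
    · rfl
    rw [hx'eq s, map_sub (P s), key, hPz, zero_sub]
    show -(P' s (P s (x s) - x s)) = _
    rw [map_sub (P' s)]
    abel
  -- y s' = 0
  have hy0 : y s' = 0 := by
    obtain ⟨z, hz⟩ := hx₀
    have hx0 : x s' = x₀ := by rw [hxdef s', hT0]; rfl
    have hPx0 : P s' x₀ = x₀ := by rw [← hz]; exact hPz s' z
    simp [hy_def, hx0, hPx0]
  -- uniqueness of the ODE solution: y ≡ 0
  intro s₁
  have hyzero : y s₁ = 0 := by
    set a : ℝ := min s' s₁ - 1 with ha_def
    set b : ℝ := max s' s₁ + 1 with hb_def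
    have hab : a ≤ b := by
      simp only [ha_def, hb_def]
      linarith [min_le_left s' s₁, le_max_left s' s₁]
    obtain ⟨C, hC⟩ := isCompact_Icc.exists_bound_of_continuousOn
      (s := Icc a b) hP'.continuousOn
    have hC0 : 0 ≤ C := le_trans (norm_nonneg _) (hC a ⟨le_refl a, hab⟩)
    set K : NNReal := ⟨C, hC0⟩ with hK_def
    set c : ℝ → ℝ := fun t => min (max t a) b with hc_def
    have hc_mem : ∀ t, c t ∈ Icc a b := by
      intro t
      constructor
      · exact le_min (le_max_right t a) hab
      · exact min_le_right _ _
    have hc_eq : ∀ t ∈ Ioo a b, c t = t := by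
      intro t ht
      simp only [hc_def]
      rw [max_eq_left ht.1.le, min_eq_left ht.2.le]
    set v : ℝ → B → B := fun t z => -(P' (c t)) z with hv_def
    have hv : ∀ t, LipschitzOnWith K (v t) (univ : Set B) := by
      intro t
      rw [lipschitzOnWith_univ]
      refine (ContinuousLinearMap.lipschitz (-(P' (c t)))).weaken ?_
      have : ‖-(P' (c t))‖ ≤ C := by
        rw [norm_neg]; exact hC _ (hc_mem t)
      exact this
    have ht₀ : s' ∈ Ioo a b := by
      constructor
      · have := min_le_left s' s₁; simp only [ha_def]; linarith
      · have := le_max_left s' s₁; simp only [hb_def]; linarith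
    have heq : EqOn y (fun _ => (0 : B)) (Icc a b) := by
      apply ODE_solution_unique_of_mem_Icc (v := v) (s := fun _ => (univ : Set B)) (fun t _ => hv t) ht₀
      · exact fun t _ => (hy' t).continuousAt.continuousWithinAt
      · intro t ht
        have : v t (y t) = -(P' t (y t)) := by
          simp [hv_def, hc_eq t ht]
        rw [this]
        exact hy' t
      · exact fun t _ => mem_univ _
      · exact continuousOn_const
      · intro t ht
        have : v t (0 : B) = 0 := by simp [hv_def]
        rw [this]
        exact hasDerivAt_const t 0
      · exact fun t _ => mem_univ _
      · exact hy0
    have hs₁ : s₁ ∈ Icc a b := by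
      constructor
      · have := min_le_right s' s₁; simp only [ha_def]; linarith
      · have := le_max_right s' s₁; simp only [hb_def]; linarith
    exact heq hs₁
  -- conclude: P x = x, so P x' = P P' P x - P P' x = -P P' P x = 0
  have hxx : P s₁ (x s₁) = x s₁ := sub_eq_zero.mp hyzero
  rw [hx'eq s₁, map_sub, key s₁, zero_sub, hPz, ← hxx, key s₁, neg_zero]
end
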